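/- Let Ω ⊆ ℝ⁵ be open and let G, H : Ω → ℝ be smooth. Suppose that through every point of Ω there passes the 2-jet of a solution: for every (x₀,y₀,z₀,p₀,r₀) ∈ Ω there exist an open neighborhood V of (x₀,y₀) and a smooth solution z : V → ℝ of the system z_y = G(x,y,z,z_x,z_xx), z_xxx = H(x,y,z,z_x,z_xx), with 2-jet map taking values in Ω, such that z(x₀,y₀) = z₀, z_x(x₀,y₀) = p₀ and z_xx(x₀,y₀) = r₀. Then Δ H = D³ G identically on Ω. -/

import Mathlib

open Filter Topology

section Helpers

variable {E : Type*} [NormedAddCommGroup E] [NormedSpace ℝ E]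

noncomputable def pdv (u : E) (f : E → ℝ) (q : E) : ℝ := fderiv ℝ f q u

lemma pdv_contDiffAt (u : E) {f : E → ℝ} {q : E} (hf : ContDiffAt ℝ (⊤ : ℕ∞) f q) :
    ContDiffAt ℝ (⊤ : ℕ∞) (pdv u f) q :=
  (hf.fderiv_right (by simp)).clm_apply contDiffAt_const

lemma pdv_symm {u w : E} {f : E → ℝ} {q : E} (hf : ContDiffAt ℝ (⊤ : ℕ∞) f q) :
    pdv u (pdv w f) q = pdv w (pdv u f) q := by
  have hd : DifferentiableAt ℝ (fderiv ℝ f) q :=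
    (hf.fderiv_right (m := (⊤ : ℕ∞)) (by simp)).differentiableAt (by simp)
  have key : ∀ a b : E, pdv a (pdv b f) q = fderiv ℝ (fderiv ℝ f) q a b := by
    intro a b
    have e : (pdv b f) = fun p => (fderiv ℝ f p) b := rfl
    rw [pdv, e, fderiv_clm_apply hd (differentiableAt_const b)]
    simp
  rw [key, key]
  exact hf.isSymmSndFDerivAt
    (by rw [minSmoothness_of_isRCLikeNormedField]; first | exact_mod_cast (le_top : (2:ℕ∞) ≤ ⊤) | norm_cast | simp) u w

lemma hasDerivAt_slice_x {f : ℝ × ℝ → ℝ} {x y : ℝ} (hf : DifferentiableAt ℝ f (x, y)) :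
    HasDerivAt (fun t => f (t, y)) (pdv ((1:ℝ), (0:ℝ)) f (x, y)) x := by
  have h1 : HasDerivAt (fun t : ℝ => (t, y)) ((1:ℝ), (0:ℝ)) x :=
    (hasDerivAt_id x).prodMk (hasDerivAt_const x y)
  exact hf.hasFDerivAt.comp_hasDerivAt x h1

lemma hasDerivAt_slice_y {f : ℝ × ℝ → ℝ} {x y : ℝ} (hf : DifferentiableAt ℝ f (x, y)) :
    HasDerivAt (fun s => f (x, s)) (pdv ((0:ℝ), (1:ℝ)) f (x, y)) y := by
  have h1 : HasDerivAt (fun s : ℝ => (x, s)) ((0:ℝ), (1:ℝ)) y :=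
    (hasDerivAt_const y x).prodMk (hasDerivAt_id y)
  exact hf.hasFDerivAt.comp_hasDerivAt y h1

lemma fderiv_apply_expand (F : (Fin 5 → ℝ) → ℝ) (m u : Fin 5 → ℝ) :
    fderiv ℝ F m u = ∑ i, u i * fderiv ℝ F m (Pi.single i 1) := by
  have hu : u = ∑ i : Fin 5, u i • (Pi.single i (1:ℝ) : Fin 5 → ℝ) := by
    funext j
    simp [Finset.sum_apply, Pi.single_apply]
  calc fderiv ℝ F m u
      = fderiv ℝ F m (∑ i : Fin 5, u i • (Pi.single i (1:ℝ) : Fin 5 → ℝ)) := by rw [← hu]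
    _ = ∑ i, u i * fderiv ℝ F m (Pi.single i 1) := by
        rw [map_sum]
        simp [smul_eq_mul]

end Helpers


/-- Partial derivative of a function on `ℝ⁵` (coordinates `(x,y,z,p,r)` indexed `0,…,4`)
in the `i`-th coordinate direction. -/
noncomputable def pd (i : Fin 5) (F : (Fin 5 → ℝ) → ℝ) (v : Fin 5 → ℝ) : ℝ :=
  fderiv ℝ F v (Pi.single i 1)

/-- The total derivative operator `D F = F_x + p F_z + r F_p + H F_r`. -/
noncomputable def Dop (H : (Fin 5 → ℝ) → ℝ) (F : (Fin 5 → ℝ) → ℝ) (v : Fin 5 → ℝ) : ℝ :=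
  pd 0 F v + v 3 * pd 2 F v + v 4 * pd 3 F v + H v * pd 4 F v

/-- The operator `Δ F = F_y + G F_z + (DG) F_p + (D²G) F_r`. -/
noncomputable def Delta (G H : (Fin 5 → ℝ) → ℝ) (F : (Fin 5 → ℝ) → ℝ) (v : Fin 5 → ℝ) : ℝ :=
  pd 1 F v + G v * pd 2 F v + Dop H G v * pd 3 F v + Dop H (Dop H G) v * pd 4 F v

/-- `z_x`. -/
noncomputable def zx (z : ℝ → ℝ → ℝ) (x y : ℝ) : ℝ := deriv (fun t => z t y) x
/-- `z_xx`. -/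
noncomputable def zxx (z : ℝ → ℝ → ℝ) (x y : ℝ) : ℝ := deriv (fun t => zx z t y) x
/-- `z_xxx`. -/
noncomputable def zxxx (z : ℝ → ℝ → ℝ) (x y : ℝ) : ℝ := deriv (fun t => zxx z t y) x
/-- `z_y`. -/
noncomputable def zy (z : ℝ → ℝ → ℝ) (x y : ℝ) : ℝ := deriv (fun s => z x s) y

/-- The 2-jet map `j(x,y) = (x, y, z(x,y), z_x(x,y), z_xx(x,y))`. -/
noncomputable def jet (z : ℝ → ℝ → ℝ) (q : ℝ × ℝ) : Fin 5 → ℝ :=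
  ![q.1, q.2, z q.1 q.2, zx z q.1 q.2, zxx z q.1 q.2]

/-- `z` is a smooth solution of the PDE system `z_y = G∘j`, `z_xxx = H∘j` on `U`,
with 2-jet map taking values in `Ω`. -/
def IsSolution (Ω : Set (Fin 5 → ℝ)) (G H : (Fin 5 → ℝ) → ℝ)
    (U : Set (ℝ × ℝ)) (z : ℝ → ℝ → ℝ) : Prop :=
  ContDiffOn ℝ (⊤ : ℕ∞) (fun q : ℝ × ℝ => z q.1 q.2) U ∧
  (∀ q ∈ U, jet z q ∈ Ω) ∧
  (∀ q ∈ U, zy z q.1 q.2 = G (jet z q)) ∧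
  (∀ q ∈ U, zxxx z q.1 q.2 = H (jet z q))

/-- If through every point of `Ω` there passes the 2-jet of a smooth
solution of the PDE system, then `Δ H = D³ G` identically on `Ω`. -/
theorem integrability_of_solvability
    (Ω : Set (Fin 5 → ℝ)) (hΩ : IsOpen Ω) (G H : (Fin 5 → ℝ) → ℝ)
    (hG : ContDiffOn ℝ (⊤ : ℕ∞) G Ω) (hH : ContDiffOn ℝ (⊤ : ℕ∞) H Ω)
    (hsol : ∀ v ∈ Ω, ∃ V : Set (ℝ × ℝ), IsOpen V ∧ (v 0, v 1) ∈ V ∧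
      ∃ z : ℝ → ℝ → ℝ, IsSolution Ω G H V z ∧
        z (v 0) (v 1) = v 2 ∧ zx z (v 0) (v 1) = v 3 ∧ zxx z (v 0) (v 1) = v 4) :
    ∀ v ∈ Ω, Delta G H H v = Dop H (Dop H (Dop H G)) v := by
  have hone : ((⊤:ℕ∞) : WithTop ℕ∞) ≠ 0 := by
    first | exact_mod_cast (le_top : (1:ℕ∞) ≤ ⊤) | norm_cast | simp
  -- smoothness of G, H, and the Dop-iterates on Ω
  have hGsm : ∀ w ∈ Ω, ContDiffAt ℝ (⊤:ℕ∞) G w := fun w hw => hG.contDiffAt (hΩ.mem_nhds hw)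
  have hHsm : ∀ w ∈ Ω, ContDiffAt ℝ (⊤:ℕ∞) H w := fun w hw => hH.contDiffAt (hΩ.mem_nhds hw)
  have hDopSm : ∀ F : (Fin 5 → ℝ) → ℝ, (∀ w ∈ Ω, ContDiffAt ℝ (⊤:ℕ∞) F w) →
      ∀ w ∈ Ω, ContDiffAt ℝ (⊤:ℕ∞) (Dop H F) w := by
    intro F hF w hw
    have h0 := pdv_contDiffAt (Pi.single (0:Fin 5) (1:ℝ)) (hF w hw)
    have h2 := pdv_contDiffAt (Pi.single (2:Fin 5) (1:ℝ)) (hF w hw)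
    have h3 := pdv_contDiffAt (Pi.single (3:Fin 5) (1:ℝ)) (hF w hw)
    have h4 := pdv_contDiffAt (Pi.single (4:Fin 5) (1:ℝ)) (hF w hw)
    have hp3 : ContDiffAt ℝ (⊤:ℕ∞) (fun m : Fin 5 → ℝ => m 3) w :=
      (ContinuousLinearMap.proj (R := ℝ) (φ := fun _ : Fin 5 => ℝ) 3).contDiff.contDiffAt
    have hp4 : ContDiffAt ℝ (⊤:ℕ∞) (fun m : Fin 5 → ℝ => m 4) w :=
      (ContinuousLinearMap.proj (R := ℝ) (φ := fun _ : Fin 5 => ℝ) 4).contDiff.contDiffAt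
    exact ((h0.add (hp3.mul h2)).add (hp4.mul h3)).add ((hHsm w hw).mul h4)
  have hD1 := hDopSm G hGsm
  have hD2 := hDopSm _ hD1
  intro v hv
  obtain ⟨V, hVopen, hq0, z, hsolz, hz0, hp0, hr0⟩ := hsol v hv
  obtain ⟨hZsm, hjΩ, hzyG, hzxxxH⟩ := hsolz
  set Z : ℝ × ℝ → ℝ := fun q => z q.1 q.2 with hZdef
  have hZ : ∀ q ∈ V, ContDiffAt ℝ (⊤:ℕ∞) Z q := fun q hq =>
    (hZsm q hq).contDiffAt (hVopen.mem_nhds hq)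
  have hPx : ∀ q ∈ V, ContDiffAt ℝ (⊤:ℕ∞) (pdv ((1:ℝ),(0:ℝ)) Z) q := fun q hq =>
    pdv_contDiffAt _ (hZ q hq)
  have hPxx : ∀ q ∈ V, ContDiffAt ℝ (⊤:ℕ∞) (pdv ((1:ℝ),(0:ℝ)) (pdv ((1:ℝ),(0:ℝ)) Z)) q :=
    fun q hq => pdv_contDiffAt _ (hPx q hq)
  have hnx : ∀ q ∈ V, ∀ᶠ t in 𝓝 q.1, (t, q.2) ∈ V := by
    intro q hq
    have hc : ContinuousAt (fun t : ℝ => (t, q.2)) q.1 :=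
      (continuous_id.prodMk continuous_const).continuousAt
    exact hc.preimage_mem_nhds (hVopen.mem_nhds (by rw [Prod.mk.eta]; exact hq))
  -- the slices
  have hzx' : ∀ q ∈ V, zx z q.1 q.2 = pdv ((1:ℝ),(0:ℝ)) Z q := by
    rintro ⟨x, y⟩ hq
    exact (hasDerivAt_slice_x ((hZ _ hq).differentiableAt hone)).deriv
  have hzxx' : ∀ q ∈ V, zxx z q.1 q.2 = pdv ((1:ℝ),(0:ℝ)) (pdv ((1:ℝ),(0:ℝ)) Z) q := by
    rintro ⟨x, y⟩ hq
    have hev : (fun t => zx z t y) =ᶠ[𝓝 x] fun t => pdv ((1:ℝ),(0:ℝ)) Z (t, y) := by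
      filter_upwards [hnx (x,y) hq] with t ht
      exact hzx' (t, y) ht
    have h1 : zxx z x y = deriv (fun t => pdv ((1:ℝ),(0:ℝ)) Z (t,y)) x := hev.deriv_eq
    rw [h1]
    exact (hasDerivAt_slice_x ((hPx _ hq).differentiableAt hone)).deriv
  have hzxxx' : ∀ q ∈ V, zxxx z q.1 q.2
      = pdv ((1:ℝ),(0:ℝ)) (pdv ((1:ℝ),(0:ℝ)) (pdv ((1:ℝ),(0:ℝ)) Z)) q := by
    rintro ⟨x, y⟩ hq
    have hev : (fun t => zxx z t y) =ᶠ[𝓝 x]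
        fun t => pdv ((1:ℝ),(0:ℝ)) (pdv ((1:ℝ),(0:ℝ)) Z) (t, y) := by
      filter_upwards [hnx (x,y) hq] with t ht
      exact hzxx' (t, y) ht
    have h1 : zxxx z x y = deriv (fun t => pdv ((1:ℝ),(0:ℝ)) (pdv ((1:ℝ),(0:ℝ)) Z) (t,y)) x :=
      hev.deriv_eq
    rw [h1]
    exact (hasDerivAt_slice_x ((hPxx _ hq).differentiableAt hone)).deriv
  have hzy' : ∀ q ∈ V, zy z q.1 q.2 = pdv ((0:ℝ),(1:ℝ)) Z q := by
    rintro ⟨x, y⟩ hq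
    exact (hasDerivAt_slice_y ((hZ _ hq).differentiableAt hone)).deriv
  -- key pointwise facts
  have hJ3 : ∀ q ∈ V, jet z q 3 = pdv ((1:ℝ),(0:ℝ)) Z q := by
    intro q hq; rw [show jet z q 3 = zx z q.1 q.2 by simp [jet]]; exact hzx' q hq
  have hJ4 : ∀ q ∈ V, jet z q 4 = pdv ((1:ℝ),(0:ℝ)) (pdv ((1:ℝ),(0:ℝ)) Z) q := by
    intro q hq; rw [show jet z q 4 = zxx z q.1 q.2 by simp [jet]]; exact hzxx' q hq
  have hH3 : ∀ q ∈ V, pdv ((1:ℝ),(0:ℝ)) (pdv ((1:ℝ),(0:ℝ)) (pdv ((1:ℝ),(0:ℝ)) Z)) q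
      = H (jet z q) := fun q hq => (hzxxx' q hq).symm.trans (hzxxxH q hq)
  have hGy : ∀ q ∈ V, pdv ((0:ℝ),(1:ℝ)) Z q = G (jet z q) := fun q hq =>
    (hzy' q hq).symm.trans (hzyG q hq)
  -- smoothness and derivative of the jet
  set φ : Fin 5 → (ℝ × ℝ → ℝ) :=
    ![fun p => p.1, fun p => p.2, Z, pdv ((1:ℝ),(0:ℝ)) Z,
      pdv ((1:ℝ),(0:ℝ)) (pdv ((1:ℝ),(0:ℝ)) Z)] with hφdef
  have hφd : ∀ q ∈ V, ∀ i : Fin 5, ContDiffAt ℝ (⊤:ℕ∞) (φ i) q := by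
    intro q hq i
    fin_cases i
    · exact contDiffAt_fst
    · exact contDiffAt_snd
    · exact hZ q hq
    · exact hPx q hq
    · exact hPxx q hq
  have hJeq : Set.EqOn (jet z) (fun p i => φ i p) V := by
    intro q hq
    funext i
    fin_cases i
    · simp [jet, hφdef]
    · simp [jet, hφdef]
    · simp [jet, hφdef, hZdef]
    · simpa [jet, hφdef] using hzx' q hq
    · simpa [jet, hφdef] using hzxx' q hq
  have hJsm : ∀ q ∈ V, ContDiffAt ℝ (⊤:ℕ∞) (jet z) q := by
    intro q hq
    have h1 : ContDiffAt ℝ (⊤:ℕ∞) (fun p i => φ i p) q :=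
      contDiffAt_pi.2 fun i => hφd q hq i
    exact h1.congr_of_eventuallyEq (hJeq.eventuallyEq_of_mem (hVopen.mem_nhds hq))
  have hJder : ∀ q ∈ V, ∀ w : ℝ × ℝ, fderiv ℝ (jet z) q w =
      ![w.1, w.2, pdv w Z q, pdv w (pdv ((1:ℝ),(0:ℝ)) Z) q,
        pdv w (pdv ((1:ℝ),(0:ℝ)) (pdv ((1:ℝ),(0:ℝ)) Z)) q] := by
    intro q hq w
    have hev : jet z =ᶠ[𝓝 q] (fun p i => φ i p) :=
      hJeq.eventuallyEq_of_mem (hVopen.mem_nhds hq)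
    rw [hev.fderiv_eq, fderiv_pi (fun i => (hφd q hq i).differentiableAt hone)]
    funext i
    have e0 : fderiv ℝ (fun p : ℝ × ℝ => p.1) q = ContinuousLinearMap.fst ℝ ℝ ℝ := fderiv_fst
    have e1 : fderiv ℝ (fun p : ℝ × ℝ => p.2) q = ContinuousLinearMap.snd ℝ ℝ ℝ := fderiv_snd
    fin_cases i
    · simp [hφdef, e0]
    · simp [hφdef, e1]
    · simp [hφdef]; rfl
    · simp [hφdef]; rfl
    · simp [hφdef]; rfl
  have hchain : ∀ q ∈ V, ∀ (w : ℝ × ℝ) (F : (Fin 5 → ℝ) → ℝ),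
      DifferentiableAt ℝ F (jet z q) →
      pdv w (fun p => F (jet z p)) q = fderiv ℝ F (jet z q) (fderiv ℝ (jet z) q w) := by
    intro q hq w F hF
    have hc : fderiv ℝ (F ∘ jet z) q
        = (fderiv ℝ F (jet z q)).comp (fderiv ℝ (jet z) q) :=
      fderiv_comp q hF ((hJsm q hq).differentiableAt hone)
    calc pdv w (fun p => F (jet z p)) q = (fderiv ℝ (F ∘ jet z) q) w := rfl
      _ = fderiv ℝ F (jet z q) (fderiv ℝ (jet z) q w) := by rw [hc]; rfl
  -- chain rule in x-direction
  have hDx : ∀ q ∈ V, ∀ F : (Fin 5 → ℝ) → ℝ, DifferentiableAt ℝ F (jet z q) →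
      pdv ((1:ℝ),(0:ℝ)) (fun p => F (jet z p)) q = Dop H F (jet z q) := by
    intro q hq F hF
    rw [hchain q hq _ F hF, hJder q hq _, fderiv_apply_expand, Fin.sum_univ_five]
    simp only [Matrix.cons_val_zero, Matrix.cons_val_one, Matrix.head_cons,
      Matrix.cons_val_two, Matrix.tail_cons, Matrix.cons_val_three, Matrix.cons_val_four,
      Matrix.head_fin_const]
    rw [Dop, hJ3 q hq, hJ4 q hq, ← hH3 q hq]
    simp only [pd, pdv]
    ring
  -- mixed partials
  have hDyPx : ∀ q ∈ V, pdv ((0:ℝ),(1:ℝ)) (pdv ((1:ℝ),(0:ℝ)) Z) q = Dop H G (jet z q) := by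
    intro q hq
    rw [pdv_symm (hZ q hq)]
    have hev : pdv ((0:ℝ),(1:ℝ)) Z =ᶠ[𝓝 q] fun p => G (jet z p) :=
      Set.EqOn.eventuallyEq_of_mem (fun p hp => hGy p hp) (hVopen.mem_nhds hq)
    have h1 : pdv ((1:ℝ),(0:ℝ)) (pdv ((0:ℝ),(1:ℝ)) Z) q
        = pdv ((1:ℝ),(0:ℝ)) (fun p => G (jet z p)) q := by
      show fderiv ℝ _ q _ = fderiv ℝ _ q _
      rw [hev.fderiv_eq]
    rw [h1]
    exact hDx q hq G ((hGsm _ (hjΩ q hq)).differentiableAt hone)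
  have hDyPxx : ∀ q ∈ V, pdv ((0:ℝ),(1:ℝ)) (pdv ((1:ℝ),(0:ℝ)) (pdv ((1:ℝ),(0:ℝ)) Z)) q
      = Dop H (Dop H G) (jet z q) := by
    intro q hq
    rw [pdv_symm (hPx q hq)]
    have hev : pdv ((0:ℝ),(1:ℝ)) (pdv ((1:ℝ),(0:ℝ)) Z) =ᶠ[𝓝 q] fun p => Dop H G (jet z p) :=
      Set.EqOn.eventuallyEq_of_mem (fun p hp => hDyPx p hp) (hVopen.mem_nhds hq)
    have h1 : pdv ((1:ℝ),(0:ℝ)) (pdv ((0:ℝ),(1:ℝ)) (pdv ((1:ℝ),(0:ℝ)) Z)) q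
        = pdv ((1:ℝ),(0:ℝ)) (fun p => Dop H G (jet z p)) q := by
      show fderiv ℝ _ q _ = fderiv ℝ _ q _
      rw [hev.fderiv_eq]
    rw [h1]
    exact hDx q hq _ ((hD1 _ (hjΩ q hq)).differentiableAt hone)
  -- chain rule in y-direction
  have hDy : ∀ q ∈ V, ∀ F : (Fin 5 → ℝ) → ℝ, DifferentiableAt ℝ F (jet z q) →
      pdv ((0:ℝ),(1:ℝ)) (fun p => F (jet z p)) q = Delta G H F (jet z q) := by
    intro q hq F hF
    rw [hchain q hq _ F hF, hJder q hq _, fderiv_apply_expand, Fin.sum_univ_five]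
    simp only [Matrix.cons_val_zero, Matrix.cons_val_one, Matrix.head_cons,
      Matrix.cons_val_two, Matrix.tail_cons, Matrix.cons_val_three, Matrix.cons_val_four,
      Matrix.head_fin_const]
    rw [hGy q hq, hDyPx q hq, hDyPxx q hq, Delta]
    simp only [pd, pdv]
    ring
  -- conclusion
  have hvJ : jet z (v 0, v 1) = v := by
    funext i
    fin_cases i
    · simp [jet]
    · simp [jet]
    · simpa [jet] using hz0
    · simpa [jet] using hp0
    · simpa [jet] using hr0
  have hHd : DifferentiableAt ℝ H (jet z (v 0, v 1)) :=
    (hHsm _ (hjΩ _ hq0)).differentiableAt hone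
  calc Delta G H H v = Delta G H H (jet z (v 0, v 1)) := by rw [hvJ]
    _ = pdv ((0:ℝ),(1:ℝ)) (fun p => H (jet z p)) (v 0, v 1) := (hDy _ hq0 H hHd).symm
    _ = pdv ((0:ℝ),(1:ℝ))
          (pdv ((1:ℝ),(0:ℝ)) (pdv ((1:ℝ),(0:ℝ)) (pdv ((1:ℝ),(0:ℝ)) Z))) (v 0, v 1) := by
        have hev : (fun p => H (jet z p)) =ᶠ[𝓝 ((v 0, v 1) : ℝ × ℝ)]
            pdv ((1:ℝ),(0:ℝ)) (pdv ((1:ℝ),(0:ℝ)) (pdv ((1:ℝ),(0:ℝ)) Z)) :=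
          Set.EqOn.eventuallyEq_of_mem (fun p hp => (hH3 p hp).symm) (hVopen.mem_nhds hq0)
        show fderiv ℝ _ _ _ = fderiv ℝ _ _ _
        rw [hev.fderiv_eq]
    _ = pdv ((1:ℝ),(0:ℝ))
          (pdv ((0:ℝ),(1:ℝ)) (pdv ((1:ℝ),(0:ℝ)) (pdv ((1:ℝ),(0:ℝ)) Z))) (v 0, v 1) :=
        pdv_symm (hPxx _ hq0)
    _ = pdv ((1:ℝ),(0:ℝ)) (fun p => Dop H (Dop H G) (jet z p)) (v 0, v 1) := by
        have hev : pdv ((0:ℝ),(1:ℝ)) (pdv ((1:ℝ),(0:ℝ)) (pdv ((1:ℝ),(0:ℝ)) Z))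
            =ᶠ[𝓝 ((v 0, v 1) : ℝ × ℝ)] fun p => Dop H (Dop H G) (jet z p) :=
          Set.EqOn.eventuallyEq_of_mem (fun p hp => hDyPxx p hp) (hVopen.mem_nhds hq0)
        show fderiv ℝ _ _ _ = fderiv ℝ _ _ _
        rw [hev.fderiv_eq]
    _ = Dop H (Dop H (Dop H G)) (jet z (v 0, v 1)) :=
        hDx _ hq0 _ ((hD2 _ (hjΩ _ hq0)).differentiableAt hone)
    _ = Dop H (Dop H (Dop H G)) v := by rw [hvJ]
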